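/- For every integer i≥0, every integer j, and every n∈ℕ: (i) f_{i,j}(n) + 1 = f_{i,j−1}(n); (ii) f_{i,0}(a(n)) + 1 = f_{i+1,F(i+1)−1}(n); (iii) f_{i,0}(b(n)) + 1 = f_{i,F(i+2)−1}(b(n)+1); (iv) f_{i+1,0}(n) + 1 = f_{i,F(i+2)−1}(a(n)+1). -/

import Mathlib

/-- The golden ratio φ = (1 + √5)/2. -/
noncomputable def phi : ℝ := (1 + Real.sqrt 5) / 2

/-- The lower Wythoff sequence a(n) = ⌊nφ⌋. -/
noncomputable def wa (n : ℕ) : ℕ := ⌊(n : ℝ) * phi⌋₊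

/-- The upper Wythoff sequence b(n) = ⌊nφ²⌋. -/
noncomputable def wb (n : ℕ) : ℕ := ⌊(n : ℝ) * phi ^ 2⌋₊

/-- f_{i,j}(n) = F(i+1)·a(n) + F(i)·n − j. -/
noncomputable def fij (i : ℕ) (j : ℤ) (n : ℕ) : ℤ :=
  (Nat.fib (i + 1) : ℤ) * wa n + (Nat.fib i : ℤ) * n - j

lemma phi_pos : 0 < phi := by
  have := Real.sqrt_nonneg 5
  unfold phi; linarith

lemma one_lt_phi : 1 < phi := by
  have h : (1:ℝ) < Real.sqrt 5 := by
    rw [show (1:ℝ) = Real.sqrt 1 by simp]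
    exact Real.sqrt_lt_sqrt (by norm_num) (by norm_num)
  unfold phi; linarith

lemma phi_lt_two : phi < 2 := by
  have h : Real.sqrt 5 < 3 := by
    rw [show (3:ℝ) = Real.sqrt 9 by
      rw [show (9:ℝ) = 3^2 by norm_num, Real.sqrt_sq]; norm_num]
    exact Real.sqrt_lt_sqrt (by norm_num) (by norm_num)
  unfold phi; linarith

lemma phi_sq : phi ^ 2 = phi + 1 := by
  have h : Real.sqrt 5 ^ 2 = 5 := Real.sq_sqrt (by norm_num)
  unfold phi; nlinarith [h]

lemma irrational_phi : Irrational phi := by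
  have h5 : Irrational (Real.sqrt 5) := (by norm_num : Nat.Prime 5).irrational_sqrt
  have h1 : Irrational (1 + Real.sqrt 5) := by simpa using h5.ratCast_add (q := 1)
  simpa [phi] using h1.div_natCast (by norm_num : (2:ℕ) ≠ 0)

lemma wa_int (n : ℕ) : (wa n : ℤ) = ⌊(n : ℝ) * phi⌋ :=
  Int.natCast_floor_eq_floor (mul_nonneg (Nat.cast_nonneg n) phi_pos.le)

lemma wb_int (n : ℕ) : (wb n : ℤ) = ⌊(n : ℝ) * phi ^ 2⌋ :=
  Int.natCast_floor_eq_floor (mul_nonneg (Nat.cast_nonneg n) (by positivity))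

lemma key (n : ℕ) (hn : 0 < n) :
    (wb n : ℤ) = wa n + n ∧ (wa (wa n) : ℤ) = wa n + n - 1 ∧
    (wa (wa n + 1) : ℤ) = wa n + n + 1 ∧
    (wa (wb n) : ℤ) = 2 * wa n + n ∧ (wa (wb n + 1) : ℤ) = 2 * wa n + n + 1 := by
  have hp := phi_pos
  have h1 := one_lt_phi
  have h2 := phi_lt_two
  have hsq := phi_sq
  have hfl : (wa n : ℝ) ≤ (n : ℝ) * phi := Nat.floor_le (by positivity)
  have hflt : (wa n : ℝ) < (n : ℝ) * phi := by
    rcases hfl.lt_or_eq with h | h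
    · exact h
    · exfalso
      have hirr : Irrational ((n:ℝ) * phi) := irrational_phi.natCast_mul hn.ne'
      exact hirr ⟨(wa n : ℚ), by push_cast; exact h⟩
  have hub : (n : ℝ) * phi < wa n + 1 := Nat.lt_floor_add_one _
  set θ : ℝ := (n : ℝ) * phi - wa n with hθ
  have hθ0 : 0 < θ := by simp only [hθ]; linarith
  have hθ1 : θ < 1 := by simp only [hθ]; linarith
  have hnphi : (n : ℝ) * phi = (wa n : ℝ) + θ := by simp [hθ]
  have hwaphi : (wa n : ℝ) * phi = (wa n : ℝ) + n - θ * (phi - 1) := by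
    nlinarith [hsq, hnphi]
  have hwb : (wb n : ℤ) = wa n + n := by
    rw [wb_int]
    rw [Int.floor_eq_iff]
    constructor <;> push_cast <;> nlinarith [hsq, hnphi]
  have hwbR : (wb n : ℝ) = (wa n : ℝ) + n := by exact_mod_cast hwb
  refine ⟨hwb, ?_, ?_, ?_, ?_⟩
  · rw [wa_int, Int.floor_eq_iff]
    constructor <;> push_cast <;> nlinarith
  · rw [wa_int, Int.floor_eq_iff]
    constructor <;> push_cast <;> nlinarith
  · rw [wa_int, Int.floor_eq_iff]
    constructor <;> push_cast [hwbR] <;> nlinarith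
  · rw [wa_int, Int.floor_eq_iff]
    constructor <;> push_cast [hwbR] <;> nlinarith

theorem stmt_4 (i : ℕ) (j : ℤ) (n : ℕ) (hn : 0 < n) :
    fij i j n + 1 = fij i (j - 1) n ∧
    fij i 0 (wa n) + 1 = fij (i + 1) ((Nat.fib (i + 1) : ℤ) - 1) n ∧
    fij i 0 (wb n) + 1 = fij i ((Nat.fib (i + 2) : ℤ) - 1) (wb n + 1) ∧
    fij (i + 1) 0 n + 1 = fij i ((Nat.fib (i + 2) : ℤ) - 1) (wa n + 1) := by
  obtain ⟨h1, h2, h3, h4, h5⟩ := key n hn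
  have hfib : (Nat.fib (i+2) : ℤ) = Nat.fib (i+1) + Nat.fib i := by
    rw [Nat.fib_add_two]; push_cast; ring
  refine ⟨by unfold fij; ring, ?_, ?_, ?_⟩ <;> unfold fij <;> push_cast
  · rw [h2, hfib]; ring
  · rw [h4, h5, h1, hfib]; ring
  · rw [h3, hfib]; ring
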